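/- arXiv:2305.18118 — 3 statements merged into one kernel-verified Lean document; each statement's English description precedes it below -/
import Mathlib

section
/- Let λ be a finite complex measure on ℝ whose support is contained in [0, ∞), and define f : ℝ → ℂ by f(t) = ∫ exp(i p t) dλ(p). If f vanishes on some nonempty open interval (a, b) ⊂ ℝ, then f vanishes identically on ℝ. -/
open MeasureTheory

open Complex Set intervalIntegral


lemma s_exp_bound {s : ℝ} (hs : 0 ≤ s) : s * Real.exp (-s) ≤ 1 := by
  have h1 : s ≤ Real.exp s := by linarith [Real.add_one_le_exp s]
  have h2 : Real.exp (-s) = (Real.exp s)⁻¹ := Real.exp_neg s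
  have h3 : (0:ℝ) < Real.exp s := Real.exp_pos s
  rw [h2]
  rw [mul_inv_le_iff₀ h3, one_mul]
  exact h1

lemma exp_term_bound {wI : ℝ → ℂ} (hpos : ∀ p, wI p ≠ 0 → 0 ≤ p) {z : ℂ} (hz : 0 ≤ z.im)
    (p : ℝ) : ‖Complex.exp (I * p * z) * wI p‖ ≤ ‖wI p‖ := by
  by_cases h : wI p = 0
  · simp [h]
  · have hp := hpos p h
    rw [norm_mul]
    have e1 : ‖Complex.exp (I * p * z)‖ = Real.exp (-(p * z.im)) := by
      rw [Complex.norm_exp]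
      congr 1
      simp [Complex.mul_re, Complex.mul_im]
    rw [e1]
    have : Real.exp (-(p * z.im)) ≤ 1 := Real.exp_le_one_iff.2 (by nlinarith)
    nlinarith [norm_nonneg (wI p), Real.exp_nonneg (-(p * z.im))]

lemma hasDerivAt_conj_conj {F : ℂ → ℂ} {z d : ℂ}
    (h : HasDerivAt F d ((starRingEnd ℂ) z)) :
    HasDerivAt (fun u => (starRingEnd ℂ) (F ((starRingEnd ℂ) u))) ((starRingEnd ℂ) d) z := by
  rw [hasDerivAt_iff_isLittleO] at h ⊢
  have hconj : Filter.Tendsto (fun u : ℂ => (starRingEnd ℂ) u) (nhds z)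
      (nhds ((starRingEnd ℂ) z)) := (Complex.continuous_conj.tendsto z)
  have h2 := h.comp_tendsto hconj
  rw [Asymptotics.isLittleO_iff] at h2 ⊢
  intro c hc
  filter_upwards [h2 hc] with u hu
  have e1 : (starRingEnd ℂ) (F ((starRingEnd ℂ) u)) - (starRingEnd ℂ) (F ((starRingEnd ℂ) z))
      - (u - z) • (starRingEnd ℂ) d
      = (starRingEnd ℂ) (F ((starRingEnd ℂ) u) - F ((starRingEnd ℂ) z)
        - ((starRingEnd ℂ) u - (starRingEnd ℂ) z) • d) := by
    simp only [map_sub, map_mul, smul_eq_mul, Complex.conj_conj]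
  rw [e1, RCLike.norm_conj]
  have e2 : ‖u - z‖ = ‖(starRingEnd ℂ) u - (starRingEnd ℂ) z‖ := by
    rw [← map_sub, RCLike.norm_conj]
  rw [e2]
  simpa using hu

lemma Fdiff {μ : Measure ℝ} [IsFiniteMeasure μ] {wI : ℝ → ℂ} (hwI : Integrable wI μ)
    (hpos : ∀ p, wI p ≠ 0 → 0 ≤ p) {z0 : ℂ} (hz0 : 0 < z0.im) :
    DifferentiableAt ℂ (fun z => ∫ p, Complex.exp (I * p * z) * wI p ∂μ) z0 := by
  have hmeas : ∀ z : ℂ, AEStronglyMeasurable (fun p : ℝ => Complex.exp (I * p * z) * wI p) μ :=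
    fun z => (Continuous.aestronglyMeasurable (by fun_prop)).mul hwI.1
  have hint : Integrable (fun p : ℝ => Complex.exp (I * p * z0) * wI p) μ :=
    hwI.norm.mono' (hmeas z0) (Filter.Eventually.of_forall (exp_term_bound hpos hz0.le))
  have hbound : ∀ᵐ (p : ℝ) ∂μ, ∀ z ∈ Metric.ball z0 (z0.im/2),
      ‖Complex.exp (I * (p:ℂ) * z) * (I * (p:ℂ)) * wI p‖ ≤ (2 / z0.im) * ‖wI p‖ := by
    apply Filter.Eventually.of_forall
    intro (p : ℝ) z hz
    by_cases h : wI p = 0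
    · simp only [h, mul_zero, norm_zero]
      positivity
    · have hp := hpos p h
      have him : z0.im / 2 ≤ z.im := by
        have hd : ‖z - z0‖ < z0.im / 2 := by
          simpa [Complex.dist_eq] using Metric.mem_ball.1 hz
        have h2 : |z.im - z0.im| < z0.im / 2 := by
          calc |z.im - z0.im| = |(z - z0).im| := by rw [Complex.sub_im]
            _ ≤ ‖z - z0‖ := Complex.abs_im_le_norm _
            _ < z0.im / 2 := hd
        have := abs_lt.1 h2
        linarith [this.1]
      rw [norm_mul, norm_mul]
      have e1 : ‖Complex.exp (I * p * z)‖ = Real.exp (-(p * z.im)) := by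
        rw [Complex.norm_exp]
        congr 1
        simp [Complex.mul_re, Complex.mul_im]
      have e2 : ‖(I * (p:ℂ))‖ = |p| := by
        rw [norm_mul, Complex.norm_I, one_mul, Complex.norm_real, Real.norm_eq_abs]
      rw [e1, e2, _root_.abs_of_nonneg hp]
      have hkey : Real.exp (-(p * z.im)) * p ≤ 2 / z0.im := by
        set c : ℝ := z0.im / 2 with hcdef
        have hcpos : 0 < c := by positivity
        have h1 : p * c * Real.exp (-(p * c)) ≤ 1 := s_exp_bound (by positivity)
        have h2 : Real.exp (-(p * z.im)) ≤ Real.exp (-(p * c)) :=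
          Real.exp_le_exp.2 (by nlinarith)
        have h3 : Real.exp (-(p * z.im)) * p ≤ Real.exp (-(p * c)) * p := by
          nlinarith [Real.exp_nonneg (-(p * z.im))]
        have h4 : Real.exp (-(p * c)) * p ≤ 1 / c := by
          rw [le_div_iff₀ hcpos]
          nlinarith
        have : (1:ℝ) / c = 2 / z0.im := by
          rw [hcdef]; field_simp
        linarith
      nlinarith [norm_nonneg (wI p), mul_le_mul_of_nonneg_right hkey (norm_nonneg (wI p)),
        Real.exp_nonneg (-(p * z.im))]
  have hdiff : ∀ᵐ (p : ℝ) ∂μ, ∀ z ∈ Metric.ball z0 (z0.im/2),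
      HasDerivAt (fun z => Complex.exp (I * (p:ℂ) * z) * wI p)
        (Complex.exp (I * (p:ℂ) * z) * (I * (p:ℂ)) * wI p) z := by
    apply Filter.Eventually.of_forall
    intro (p : ℝ) z _
    have h1 : HasDerivAt (fun z : ℂ => I * (p:ℂ) * z) (I * (p:ℂ)) z := by
      simpa using (hasDerivAt_id z).const_mul (I * (p:ℂ))
    exact h1.cexp.mul_const (wI p)
  have key := hasDerivAt_integral_of_dominated_loc_of_deriv_le (μ := μ)
    (F := fun z p => Complex.exp (I * p * z) * wI p)
    (F' := fun z p => Complex.exp (I * p * z) * (I * p) * wI p)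
    (x₀ := z0) (bound := fun p => (2 / z0.im) * ‖wI p‖)
    (s := Metric.ball z0 (z0.im/2)) (Metric.ball_mem_nhds z0 (half_pos hz0)) (Filter.Eventually.of_forall hmeas) hint
    (((by fun_prop : Continuous fun p : ℝ => Complex.exp (I * p * z0) * (I * p))).aestronglyMeasurable.mul hwI.1)
    hbound (hwI.norm.const_mul _) hdiff
  exact key.2.differentiableAt

section helpers

lemma abs_sub_le_of_mem_uIcc {a b x : ℝ} (hx : x ∈ Set.uIcc a b) : |x - a| ≤ |b - a| := by
  rcases le_total a b with h | h
  · rw [Set.uIcc_of_le h] at hx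
    rw [_root_.abs_of_nonneg (by linarith [hx.1]), _root_.abs_of_nonneg (by linarith)]
    linarith [hx.2]
  · rw [Set.uIcc_of_ge h] at hx
    rw [_root_.abs_of_nonpos (by linarith [hx.2]), _root_.abs_of_nonpos (by linarith)]
    linarith [hx.1]

variable {H : ℂ → ℂ} {x0 r : ℝ}

lemma horizInt (hc : ContinuousOn H (Set.Icc (x0-r) (x0+r) ×ℂ Set.Icc (-r) r))
    {u v c : ℝ} (hu : u ∈ Set.Icc (x0-r) (x0+r)) (hv : v ∈ Set.Icc (x0-r) (x0+r))
    (hcm : c ∈ Set.Icc (-r) r) :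
    IntervalIntegrable (fun x : ℝ => H (x + c * I)) volume u v := by
  apply ContinuousOn.intervalIntegrable
  apply hc.comp (by fun_prop)
  intro x hx
  rw [Complex.mem_reProdIm]
  constructor
  · simpa using Set.uIcc_subset_Icc hu hv hx
  · simpa using hcm

lemma vertInt (hc : ContinuousOn H (Set.Icc (x0-r) (x0+r) ×ℂ Set.Icc (-r) r))
    {u v c : ℝ} (hu : u ∈ Set.Icc (-r) r) (hv : v ∈ Set.Icc (-r) r)
    (hcm : c ∈ Set.Icc (x0-r) (x0+r)) :
    IntervalIntegrable (fun y : ℝ => H (c + y * I)) volume u v := by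
  apply ContinuousOn.intervalIntegrable
  apply hc.comp (by fun_prop)
  intro y hy
  rw [Complex.mem_reProdIm]
  constructor
  · simpa using hcm
  · simpa using Set.uIcc_subset_Icc hu hv hy

lemma realInt (hc : ContinuousOn H (Set.Icc (x0-r) (x0+r) ×ℂ Set.Icc (-r) r))
    (hr : 0 ≤ r) {u v : ℝ} (hu : u ∈ Set.Icc (x0-r) (x0+r)) (hv : v ∈ Set.Icc (x0-r) (x0+r)) :
    IntervalIntegrable (fun x : ℝ => H x) volume u v := by
  have := horizInt hc hu hv (c := 0) (by constructor <;> linarith)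
  simpa using this


lemma im_ne_zero_of_mem_Ioo_min_max {a x : ℝ} (hx : x ∈ Set.Ioo (min a 0) (max a 0)) : x ≠ 0 := by
  rintro rfl
  rcases hx with ⟨h1, h2⟩
  rcases min_lt_iff.1 h1 with h | h
  · exact absurd (lt_max_iff.1 h2) (by simp [not_or, le_of_lt h])
  · exact lt_irrefl _ h

lemma rect_zero {H : ℂ → ℂ} {x0 r : ℝ}
    (hc : ContinuousOn H (Set.Icc (x0-r) (x0+r) ×ℂ Set.Icc (-r) r))
    (hd : ∀ z : ℂ, z.im ≠ 0 → DifferentiableAt ℂ H z)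
    {z w : ℂ} (hz : z ∈ Set.Icc (x0-r) (x0+r) ×ℂ Set.Icc (-r) r)
    (hw : w ∈ Set.Icc (x0-r) (x0+r) ×ℂ Set.Icc (-r) r) :
    (∫ x in z.re..w.re, H (x + z.im * I)) - (∫ x in z.re..w.re, H (x + w.im * I)) +
      I • (∫ y in z.im..w.im, H (w.re + y * I)) -
      I • (∫ y in z.im..w.im, H (z.re + y * I)) = 0 := by
  rw [Complex.mem_reProdIm] at hz hw
  have hr0 : (0:ℝ) ∈ Set.Icc (-r) r := by
    constructor
    · nlinarith [hz.2.1, hz.2.2]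
    · nlinarith [hz.2.1, hz.2.2]
  have hsub1 : Set.uIcc z.re w.re ⊆ Set.Icc (x0-r) (x0+r) := Set.uIcc_subset_Icc hz.1 hw.1
  have hsub2 : Set.uIcc z.im (0:ℝ) ⊆ Set.Icc (-r) r := Set.uIcc_subset_Icc hz.2 hr0
  have hsub3 : Set.uIcc (0:ℝ) w.im ⊆ Set.Icc (-r) r := Set.uIcc_subset_Icc hr0 hw.2
  have hsub4 : Set.uIcc z.im w.im ⊆ Set.Icc (-r) r := Set.uIcc_subset_Icc hz.2 hw.2
  -- first (lower) rectangle: corners z and (w.re : ℂ)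
  have E1 := integral_boundary_rect_eq_zero_of_differentiable_on_off_countable H z
    (w.re : ℂ) ∅ countable_empty
    (hc.mono (by
      rw [Complex.reProdIm_subset_iff']
      left
      simp only [Complex.ofReal_re, Complex.ofReal_im]
      exact ⟨hsub1, hsub2⟩))
    (by
      intro x hx
      apply hd
      simp only [Complex.ofReal_im, Set.mem_diff, Complex.mem_reProdIm] at hx
      exact im_ne_zero_of_mem_Ioo_min_max hx.1.2)
  -- second (upper) rectangle: corners (z.re : ℂ) and w
  have E2 := integral_boundary_rect_eq_zero_of_differentiable_on_off_countable H
    (z.re : ℂ) w ∅ countable_empty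
    (hc.mono (by
      rw [Complex.reProdIm_subset_iff']
      left
      simp only [Complex.ofReal_re, Complex.ofReal_im]
      exact ⟨Set.uIcc_subset_Icc hz.1 hw.1, Set.uIcc_subset_Icc hr0 hw.2⟩))
    (by
      intro x hx
      apply hd
      simp only [Complex.ofReal_im, Set.mem_diff, Complex.mem_reProdIm] at hx
      have h2 := hx.1.2
      rw [inf_comm, sup_comm] at h2
      exact im_ne_zero_of_mem_Ioo_min_max h2)
  simp only [Complex.ofReal_re, Complex.ofReal_im, Complex.ofReal_zero, zero_mul, add_zero] at E1 E2
  -- integrability for gluing vertical integrals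
  have cInt : ∀ c : ℝ, c ∈ Set.Icc (x0-r) (x0+r) → ∀ u v : ℝ, u ∈ Set.Icc (-r) r →
      v ∈ Set.Icc (-r) r → IntervalIntegrable (fun y : ℝ => H (c + y * I)) volume u v := by
    intro c hcm u v hu hv
    apply ContinuousOn.intervalIntegrable
    apply hc.comp (by fun_prop)
    intro y hy
    rw [Complex.mem_reProdIm]
    constructor
    · simpa using hcm
    · simpa using Set.uIcc_subset_Icc hu hv hy
  have g1 : (∫ y in z.im..(0:ℝ), H (w.re + y * I)) + (∫ y in (0:ℝ)..w.im, H (w.re + y * I))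
      = ∫ y in z.im..w.im, H (w.re + y * I) :=
    integral_add_adjacent_intervals (cInt _ hw.1 _ _ hz.2 hr0) (cInt _ hw.1 _ _ hr0 hw.2)
  have g2 : (∫ y in z.im..(0:ℝ), H (z.re + y * I)) + (∫ y in (0:ℝ)..w.im, H (z.re + y * I))
      = ∫ y in z.im..w.im, H (z.re + y * I) :=
    integral_add_adjacent_intervals (cInt _ hz.1 _ _ hz.2 hr0) (cInt _ hz.1 _ _ hr0 hw.2)
  rw [← g1, ← g2]
  simp only [smul_add]
  linear_combination E1 + E2

lemma path_diff {H : ℂ → ℂ} {x0 r : ℝ} (hr : 0 < r)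
    (hc : ContinuousOn H (Set.Icc (x0-r) (x0+r) ×ℂ Set.Icc (-r) r))
    (hd : ∀ z : ℂ, z.im ≠ 0 → DifferentiableAt ℂ H z)
    {z w : ℂ} (hz : z ∈ Set.Icc (x0-r) (x0+r) ×ℂ Set.Icc (-r) r)
    (hw : w ∈ Set.Icc (x0-r) (x0+r) ×ℂ Set.Icc (-r) r) :
    ((∫ x in x0..w.re, H x) + I • ∫ y in (0:ℝ)..w.im, H (w.re + y * I))
      - ((∫ x in x0..z.re, H x) + I • ∫ y in (0:ℝ)..z.im, H (z.re + y * I))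
    = (∫ x in z.re..w.re, H (x + z.im * I)) + I • ∫ y in z.im..w.im, H (w.re + y * I) := by
  have hx0 : x0 ∈ Set.Icc (x0-r) (x0+r) := by constructor <;> linarith
  have h0m : (0:ℝ) ∈ Set.Icc (-r) r := by constructor <;> linarith
  rw [Complex.mem_reProdIm] at hz hw
  have hw' : (w.re : ℂ) ∈ Set.Icc (x0-r) (x0+r) ×ℂ Set.Icc (-r) r :=
    Complex.mem_reProdIm.2 ⟨by simpa using hw.1, by simpa using h0m⟩
  have hB := rect_zero hc hd (Complex.mem_reProdIm.2 hz) hw'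
  simp only [Complex.ofReal_re, Complex.ofReal_im, Complex.ofReal_zero, zero_mul,
    add_zero] at hB
  have h0 : (∫ x in x0..w.re, H x) - (∫ x in x0..z.re, H x) = ∫ x in z.re..w.re, H x :=
    integral_interval_sub_left (realInt hc hr.le hx0 hw.1) (realInt hc hr.le hx0 hz.1)
  have g1 : (∫ y in z.im..(0:ℝ), H (w.re + y * I)) + (∫ y in (0:ℝ)..w.im, H (w.re + y * I))
      = ∫ y in z.im..w.im, H (w.re + y * I) :=
    integral_add_adjacent_intervals (vertInt hc hz.2 h0m hw.1) (vertInt hc h0m hw.2 hw.1)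
  have g2 : (∫ y in z.im..(0:ℝ), H (z.re + y * I)) + (∫ y in (0:ℝ)..z.im, H (z.re + y * I))
      = 0 := by
    rw [integral_add_adjacent_intervals (vertInt hc hz.2 h0m hz.1) (vertInt hc h0m hz.2 hz.1)]
    exact integral_same
  simp only [smul_eq_mul] at *
  linear_combination h0 - hB + I * g1 - I * g2

lemma morera {H : ℂ → ℂ} {x0 r : ℝ} (hr : 0 < r)
    (hc : ContinuousOn H (Set.Icc (x0-r) (x0+r) ×ℂ Set.Icc (-r) r))
    (hd : ∀ z : ℂ, z.im ≠ 0 → DifferentiableAt ℂ H z) :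
    ∀ z ∈ Set.Ioo (x0-r) (x0+r) ×ℂ Set.Ioo (-r) r, DifferentiableAt ℂ H z := by
  set S := Set.Ioo (x0-r) (x0+r) ×ℂ Set.Ioo (-r) r with hS
  have hSopen : IsOpen S := IsOpen.reProdIm isOpen_Ioo isOpen_Ioo
  have hSQ : S ⊆ Set.Icc (x0-r) (x0+r) ×ℂ Set.Icc (-r) r := by
    rw [Complex.reProdIm_subset_iff']
    exact Or.inl ⟨Set.Ioo_subset_Icc_self, Set.Ioo_subset_Icc_self⟩
  set G : ℂ → ℂ := fun z => (∫ x in x0..z.re, H x) + I • ∫ y in (0:ℝ)..z.im, H (z.re + y * I)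
    with hGdef
  have hG : ∀ z ∈ S, HasDerivAt G (H z) z := by
    intro z hz
    rw [hasDerivAt_iff_isLittleO, Asymptotics.isLittleO_iff]
    intro c hc0
    have hHc : ContinuousAt H z :=
      hc.continuousAt (Filter.mem_of_superset (hSopen.mem_nhds hz) hSQ)
    rcases Metric.continuousAt_iff.1 hHc (c/2) (by positivity) with ⟨δ1, hδ1pos, hδ1⟩
    rcases Metric.isOpen_iff.1 hSopen z hz with ⟨δ2, hδ2pos, hδ2⟩
    have hδpos : 0 < min (δ1/2) δ2 := lt_min (by positivity) hδ2pos
    filter_upwards [Metric.ball_mem_nhds z hδpos] with u hu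
    have huz : dist u z < min (δ1/2) δ2 := Metric.mem_ball.1 hu
    have huS : u ∈ S := hδ2 (lt_of_lt_of_le huz (min_le_right _ _))
    have hpath := path_diff hr hc hd (hSQ hz) (hSQ huS)
    have hzQ := hSQ hz
    have huQ := hSQ huS
    rw [Complex.mem_reProdIm] at hzQ huQ
    -- bound pieces
    have key1 : ∀ x ∈ Set.uIcc z.re u.re, ‖H (x + z.im * I) - H z‖ ≤ c/2 := by
      intro x hx
      have hd1 : dist (↑x + ↑z.im * I) z < δ1 := by
        have he : (↑x + ↑z.im * I) - z = ((x - z.re : ℝ) : ℂ) := by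
          apply Complex.ext <;> simp
        rw [dist_eq_norm, he, Complex.norm_real, Real.norm_eq_abs]
        calc |x - z.re| ≤ |u.re - z.re| := abs_sub_le_of_mem_uIcc hx
          _ ≤ ‖u - z‖ := by rw [← Complex.sub_re]; exact Complex.abs_re_le_norm _
          _ < δ1 := by
            have := lt_of_lt_of_le huz (min_le_left _ _)
            rw [Complex.dist_eq] at this
            linarith
      exact le_of_lt (by simpa [dist_eq_norm] using hδ1 hd1)
    have key2 : ∀ y ∈ Set.uIcc z.im u.im, ‖H (u.re + y * I) - H z‖ ≤ c/2 := by
      intro y hy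
      have hd1 : dist (↑u.re + ↑y * I) z < δ1 := by
        have he : (↑u.re + ↑y * I) - z = ⟨u.re - z.re, y - z.im⟩ := by
          apply Complex.ext <;> simp
        rw [Complex.dist_eq, he]
        calc ‖(⟨u.re - z.re, y - z.im⟩ : ℂ)‖ ≤ |u.re - z.re| + |y - z.im| := by
              simpa using Complex.norm_le_abs_re_add_abs_im ⟨u.re - z.re, y - z.im⟩
          _ ≤ ‖u - z‖ + ‖u - z‖ := by
              have h1 : |u.re - z.re| ≤ ‖u - z‖ := by
                rw [← Complex.sub_re]; exact Complex.abs_re_le_norm _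
              have h2 : |y - z.im| ≤ ‖u - z‖ := by
                calc |y - z.im| ≤ |u.im - z.im| := abs_sub_le_of_mem_uIcc hy
                  _ ≤ ‖u - z‖ := by
                    rw [← Complex.sub_im]; exact Complex.abs_im_le_norm _
              linarith
          _ < δ1 := by
            have := lt_of_lt_of_le huz (min_le_left _ _)
            rw [Complex.dist_eq] at this
            linarith
      exact le_of_lt (by simpa [dist_eq_norm] using hδ1 hd1)
    -- rewrite the difference
    have ia : IntervalIntegrable (fun x : ℝ => H (x + z.im * I)) volume z.re u.re :=
      horizInt hc hzQ.1 huQ.1 hzQ.2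
    have ib : IntervalIntegrable (fun y : ℝ => H (u.re + y * I)) volume z.im u.im :=
      vertInt hc hzQ.2 huQ.2 huQ.1
    have ea : (∫ x in z.re..u.re, (H (x + z.im * I) - H z))
        = (∫ x in z.re..u.re, H (x + z.im * I)) - (u.re - z.re) • H z := by
      rw [integral_sub ia intervalIntegrable_const, intervalIntegral.integral_const]
    have eb : (∫ y in z.im..u.im, (H (u.re + y * I) - H z))
        = (∫ y in z.im..u.im, H (u.re + y * I)) - (u.im - z.im) • H z := by
      rw [integral_sub ib intervalIntegrable_const, intervalIntegral.integral_const]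
    have hsplit : u - z = ((u.re - z.re : ℝ) : ℂ) + ((u.im - z.im : ℝ) : ℂ) * I := by
      apply Complex.ext <;> simp
    have emain : G u - G z - (u - z) • H z
        = (∫ x in z.re..u.re, (H (x + z.im * I) - H z))
          + I • ∫ y in z.im..u.im, (H (u.re + y * I) - H z) := by
      rw [ea, eb]
      simp only [hGdef, smul_eq_mul, real_smul] at *
      rw [hsplit]
      linear_combination hpath
    rw [emain]
    have n1 : ‖∫ x in z.re..u.re, (H (x + z.im * I) - H z)‖ ≤ (c/2) * |u.re - z.re| :=
      intervalIntegral.norm_integral_le_of_norm_le_const fun x hx =>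
        key1 x (Set.uIoc_subset_uIcc hx)
    have n2 : ‖∫ y in z.im..u.im, (H (u.re + y * I) - H z)‖ ≤ (c/2) * |u.im - z.im| :=
      intervalIntegral.norm_integral_le_of_norm_le_const fun y hy =>
        key2 y (Set.uIoc_subset_uIcc hy)
    have hre : |u.re - z.re| ≤ ‖u - z‖ := by
      rw [← Complex.sub_re]; exact Complex.abs_re_le_norm _
    have him : |u.im - z.im| ≤ ‖u - z‖ := by
      rw [← Complex.sub_im]; exact Complex.abs_im_le_norm _
    calc ‖(∫ x in z.re..u.re, (H (x + z.im * I) - H z))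
          + I • ∫ y in z.im..u.im, (H (u.re + y * I) - H z)‖
        ≤ ‖∫ x in z.re..u.re, (H (x + z.im * I) - H z)‖
          + ‖I • ∫ y in z.im..u.im, (H (u.re + y * I) - H z)‖ := norm_add_le _ _
      _ ≤ (c/2) * |u.re - z.re| + (c/2) * |u.im - z.im| := by
          rw [norm_smul, Complex.norm_I, one_mul]
          linarith
      _ ≤ c * ‖u - z‖ := by nlinarith [norm_nonneg (u - z)]
  have hGdiff : DifferentiableOn ℂ G S :=
    fun z hz => ((hG z hz).differentiableAt).differentiableWithinAt
  have hGanal : AnalyticOnNhd ℂ (deriv G) S := (hGdiff.analyticOnNhd hSopen).deriv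
  intro z hz
  have h3 : DifferentiableAt ℂ (deriv G) z := (hGanal z hz).differentiableAt
  apply h3.congr_of_eventuallyEq
  filter_upwards [hSopen.mem_nhds hz] with u hu
  exact ((hG u hu).deriv).symm
/-- A finite complex measure `λ` on `ℝ` is represented as a density `w` (integrable)
with respect to a finite measure `μ`. Support in `[0,∞)` means the measure of every
measurable set disjoint from `[0,∞)` (i.e. contained in `(-∞,0)`) vanishes.
If `f t = ∫ e^{ipt} dλ(p)` vanishes on a nonempty open interval, it vanishes identically. -/
theorem stmt0 (μ : Measure ℝ) [IsFiniteMeasure μ] (w : ℝ → ℂ)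
    (hw : Integrable w μ)
    (hsupp : ∀ A : Set ℝ, MeasurableSet A → A ⊆ Set.Iio 0 → ∫ p in A, w p ∂μ = 0)
    (f : ℝ → ℂ)
    (hf : ∀ t : ℝ, f t = ∫ p, Complex.exp (Complex.I * (p : ℂ) * (t : ℂ)) * w p ∂μ)
    (a b : ℝ) (hab : a < b)
    (hvanish : ∀ t ∈ Set.Ioo a b, f t = 0) :
    ∀ t : ℝ, f t = 0 := by
  classical
  -- w vanishes a.e. on the negatives
  have hres : w =ᵐ[μ.restrict (Set.Iio 0)] 0 := by
    apply Integrable.ae_eq_zero_of_forall_setIntegral_eq_zero (hw.restrict)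
    intro s hs _
    rw [Measure.restrict_restrict hs]
    exact hsupp (s ∩ Set.Iio 0) (hs.inter measurableSet_Iio) Set.inter_subset_right
  have hae : ∀ᵐ p ∂μ, p ∈ Set.Iio 0 → w p = 0 := (ae_restrict_iff' measurableSet_Iio).1 hres
  set wI : ℝ → ℂ := Set.indicator (Set.Ici 0) w with hwIdef
  have hwae : w =ᵐ[μ] wI := by
    filter_upwards [hae] with p hp
    by_cases h : p ∈ Set.Ici 0
    · simp [hwIdef, Set.indicator_of_mem h]
    · have hneg : p ∈ Set.Iio 0 := by simpa [Set.mem_Iio, not_le] using h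
      simp [hwIdef, Set.indicator_of_notMem h, hp hneg]
  have hwI : Integrable wI μ := hw.congr hwae
  have hpos : ∀ p, wI p ≠ 0 → 0 ≤ p := by
    intro p h
    by_contra hn
    exact h (Set.indicator_of_notMem (by simpa using hn) w)
  set F : ℂ → ℂ := fun z => ∫ p, Complex.exp (I * p * z) * wI p ∂μ with hFdef
  have hFreal : ∀ t : ℝ, F t = f t := by
    intro t
    rw [hf t]
    exact integral_congr_ae (by filter_upwards [hwae] with p hp; rw [hp])
  have hmeas : ∀ z : ℂ, AEStronglyMeasurable (fun p : ℝ => Complex.exp (I * p * z) * wI p) μ :=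
    fun z => (Continuous.aestronglyMeasurable (by fun_prop)).mul hwI.1
  -- continuity on closed upper half plane
  have hFcont : ContinuousOn F {z : ℂ | 0 ≤ z.im} := by
    apply continuousOn_of_dominated (bound := fun p => ‖wI p‖) (fun z _ => hmeas z)
      (fun z hz => Filter.Eventually.of_forall (exp_term_bound hpos hz))
      hwI.norm
    exact Filter.Eventually.of_forall fun p => (Continuous.continuousOn (by fun_prop))
  -- differentiability on open upper half plane
  have hFdiffAt : ∀ z : ℂ, 0 < z.im → DifferentiableAt ℂ F z := fun z hz => Fdiff hwI hpos hz
  -- the reflected function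
  set H : ℂ → ℂ := fun z => if 0 ≤ z.im then F z else (starRingEnd ℂ) (F ((starRingEnd ℂ) z))
    with hHdef
  have hHopenpos : ∀ z : ℂ, 0 < z.im → H =ᶠ[nhds z] F := by
    intro z hz
    filter_upwards [(isOpen_lt continuous_const Complex.continuous_im).mem_nhds hz] with u hu
    simp only [hHdef]
    rw [if_pos (le_of_lt hu)]
  have hHopenneg : ∀ z : ℂ, z.im < 0 →
      H =ᶠ[nhds z] fun u => (starRingEnd ℂ) (F ((starRingEnd ℂ) u)) := by
    intro z hz
    filter_upwards [(isOpen_lt Complex.continuous_im continuous_const).mem_nhds hz] with u hu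
    simp only [hHdef]
    rw [if_neg (not_le.2 hu)]
  have hHdiff : ∀ z : ℂ, z.im ≠ 0 → DifferentiableAt ℂ H z := by
    intro z hz
    rcases lt_or_gt_of_ne hz with h | h
    · have hcim : 0 < ((starRingEnd ℂ) z).im := by
        rw [Complex.conj_im]; linarith
      have hd := (hFdiffAt _ hcim).hasDerivAt
      exact (hasDerivAt_conj_conj hd).differentiableAt.congr_of_eventuallyEq (hHopenneg z h)
    · exact (hFdiffAt z h).congr_of_eventuallyEq (hHopenpos z h)
  -- H vanishes on the real segment (a,b)
  have hH0 : ∀ x : ℝ, x ∈ Set.Ioo a b → H (x : ℂ) = 0 := by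
    intro x hx
    have him : ((x:ℂ)).im = 0 := by simp
    simp only [hHdef]
    rw [if_pos (le_of_eq him.symm), hFreal x, hvanish x hx]
  -- geometry: the square
  set x0 : ℝ := (a + b) / 2 with hx0def
  set r : ℝ := (b - a) / 4 with hrdef
  have hr : 0 < r := by rw [hrdef]; linarith
  have hsubab : Set.Icc (x0 - r) (x0 + r) ⊆ Set.Ioo a b := by
    intro x hx
    rcases hx with ⟨h1, h2⟩
    rw [hx0def, hrdef] at h1 h2
    constructor <;> nlinarith
  -- continuity of H on the closed square
  have hHcont : ContinuousOn H (Set.Icc (x0-r) (x0+r) ×ℂ Set.Icc (-r) r) := by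
    intro z hz
    rcases lt_trichotomy z.im 0 with h | h | h
    · apply ContinuousWithinAt.mono _ (Set.subset_univ _)
      rw [continuousWithinAt_univ]
      have hcim : 0 < ((starRingEnd ℂ) z).im := by rw [Complex.conj_im]; linarith
      have hFc : ContinuousAt F ((starRingEnd ℂ) z) :=
        hFcont.continuousAt (Filter.mem_of_superset
          ((isOpen_lt continuous_const Complex.continuous_im).mem_nhds hcim)
          (fun u (hu : 0 < u.im) => le_of_lt hu))
      have hca : ContinuousAt (fun u => (starRingEnd ℂ) (F ((starRingEnd ℂ) u))) z :=
        Complex.continuous_conj.continuousAt.comp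
          (hFc.comp Complex.continuous_conj.continuousAt)
      exact hca.congr (hHopenneg z h).symm
    · -- z on the real axis, inside (a,b)
      have hzre : z.re ∈ Set.Ioo a b := hsubab (Complex.mem_reProdIm.1 hz).1
      have hzeq : z = ((z.re : ℝ) : ℂ) := Complex.ext rfl (by simp [h])
      have hFz : F z = 0 := by
        rw [hzeq, hFreal, hvanish _ hzre]
      have hHz : H z = F z := by
        simp only [hHdef]
        rw [if_pos (le_of_eq h.symm)]
      apply ContinuousWithinAt.mono _ (Set.subset_univ _)
      rw [continuousWithinAt_univ]
      rw [Metric.continuousAt_iff]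
      intro ε hε
      have hFcw : ContinuousWithinAt F {z : ℂ | 0 ≤ z.im} z := hFcont z (le_of_eq h.symm)
      rw [Metric.continuousWithinAt_iff] at hFcw
      rcases hFcw ε hε with ⟨δ, hδpos, hδ⟩
      refine ⟨δ, hδpos, ?_⟩
      intro u hu
      by_cases hui : 0 ≤ u.im
      · have h1 : H u = F u := by simp only [hHdef]; rw [if_pos hui]
        rw [h1, hHz]
        exact hδ hui hu
      · have h1 : H u = (starRingEnd ℂ) (F ((starRingEnd ℂ) u)) := by
          simp only [hHdef]; rw [if_neg hui]
        have hcu : ((starRingEnd ℂ) u) ∈ {z : ℂ | 0 ≤ z.im} := by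
          simp only [Set.mem_setOf_eq, Complex.conj_im]
          linarith [not_le.1 hui]
        have hcd : dist ((starRingEnd ℂ) u) z < δ := by
          have heq : dist ((starRingEnd ℂ) u) z = dist u z := by
            rw [Complex.dist_eq, Complex.dist_eq]
            have hzc : (starRingEnd ℂ) z = z := Complex.conj_eq_iff_im.2 h
            rw [← hzc, ← map_sub, Complex.norm_conj, hzc]
          rw [heq]
          exact hu
        have hkey := hδ hcu hcd
        rw [hFz, dist_zero_right] at hkey
        rw [h1, hHz, hFz, dist_zero_right, RCLike.norm_conj]
        exact hkey
    · apply ContinuousWithinAt.mono _ (Set.subset_univ _)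
      rw [continuousWithinAt_univ]
      have hFc : ContinuousAt F z :=
        hFcont.continuousAt (Filter.mem_of_superset
          ((isOpen_lt continuous_const Complex.continuous_im).mem_nhds h)
          (fun u (hu : 0 < u.im) => le_of_lt hu))
      exact hFc.congr (hHopenpos z h).symm
  -- Morera: H is differentiable on the open square, hence analytic
  have hSdiff := morera hr hHcont hHdiff
  set S : Set ℂ := Set.Ioo (x0-r) (x0+r) ×ℂ Set.Ioo (-r) r with hSdef
  have hSopen : IsOpen S := IsOpen.reProdIm isOpen_Ioo isOpen_Ioo
  have hHdiffOn : DifferentiableOn ℂ H S := fun z hz => (hSdiff z hz).differentiableWithinAt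
  have hHanal : AnalyticOnNhd ℂ H S := hHdiffOn.analyticOnNhd hSopen
  have hSconv : Convex ℝ S := by
    have hh := Complex.convexHull_reProdIm (Set.Ioo (x0-r) (x0+r)) (Set.Ioo (-r) r)
    rw [(convex_Ioo _ _).convexHull_eq, (convex_Ioo _ _).convexHull_eq] at hh
    rw [hSdef, ← hh]
    exact convex_convexHull ℝ _
  have hx0S : ((x0:ℝ):ℂ) ∈ S := by
    rw [hSdef, Complex.mem_reProdIm]
    constructor
    · simp only [Complex.ofReal_re]
      constructor <;> linarith
    · simp only [Complex.ofReal_im]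
      constructor <;> linarith
  -- frequently zero near x0 on the real axis
  have hfreq : ∃ᶠ z in nhdsWithin ((x0:ℝ):ℂ) {((x0:ℝ):ℂ)}ᶜ, H z = 0 := by
    have htend0 : Filter.Tendsto (fun n : ℕ => r / ((n:ℝ) + 2)) Filter.atTop (nhds 0) :=
      Filter.Tendsto.div_atTop tendsto_const_nhds
        (Filter.tendsto_atTop_add_const_right _ 2 tendsto_natCast_atTop_atTop)
    have htendr : Filter.Tendsto (fun n : ℕ => ((x0 + r / ((n:ℝ) + 2) : ℝ) : ℂ)) Filter.atTop
        (nhds ((x0:ℝ):ℂ)) := by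
      have h2 : Filter.Tendsto (fun n : ℕ => (x0 + r / ((n:ℝ) + 2) : ℝ)) Filter.atTop
          (nhds x0) := by
        simpa using tendsto_const_nhds.add htend0
      exact (Complex.continuous_ofReal.tendsto x0).comp h2
    have htendw : Filter.Tendsto (fun n : ℕ => ((x0 + r / ((n:ℝ) + 2) : ℝ) : ℂ)) Filter.atTop
        (nhdsWithin ((x0:ℝ):ℂ) {((x0:ℝ):ℂ)}ᶜ) := by
      apply tendsto_nhdsWithin_of_tendsto_nhds_of_eventually_within _ htendr
      apply Filter.Eventually.of_forall
      intro n
      simp only [Set.mem_compl_iff, Set.mem_singleton_iff]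
      intro hcontra
      have heq := Complex.ofReal_injective hcontra
      have hpos' : 0 < r / ((n:ℝ) + 2) := by positivity
      linarith [hpos', heq.le, heq.ge]
    apply htendw.frequently
    apply Filter.Frequently.of_forall
    intro n
    apply hH0
    have hpos' : 0 < r / ((n:ℝ) + 2) := by positivity
    have hle : r / ((n:ℝ) + 2) ≤ r / 2 := by
      apply div_le_div_of_nonneg_left hr.le (by norm_num)
      have : (0:ℝ) ≤ (n:ℝ) := Nat.cast_nonneg n
      linarith
    rw [hx0def, hrdef] at *
    constructor <;> nlinarith
  have hHS : Set.EqOn H 0 S :=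
    hHanal.eqOn_zero_of_preconnected_of_frequently_eq_zero hSconv.isPreconnected hx0S hfreq
  -- F vanishes on the upper half plane
  have hUHopen : IsOpen {z : ℂ | 0 < z.im} := isOpen_lt continuous_const Complex.continuous_im
  have hFdiffOn : DifferentiableOn ℂ F {z : ℂ | 0 < z.im} :=
    fun z hz => (hFdiffAt z hz).differentiableWithinAt
  have hFanal : AnalyticOnNhd ℂ F {z : ℂ | 0 < z.im} := hFdiffOn.analyticOnNhd hUHopen
  have hz1S : ((x0:ℝ):ℂ) + (r/2 : ℝ) * I ∈ S := by
    rw [hSdef, Complex.mem_reProdIm]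
    constructor
    · simp only [Complex.add_re, Complex.ofReal_re, Complex.mul_re, Complex.ofReal_im,
        Complex.I_re, Complex.I_im, mul_zero, zero_mul, sub_zero, mul_one]
      constructor <;> simp <;> linarith
    · simp only [Complex.add_im, Complex.ofReal_im, Complex.mul_im, Complex.ofReal_re,
        Complex.I_im, Complex.I_re, mul_zero, mul_one, zero_add, zero_mul, add_zero]
      constructor <;> linarith
  have hz1U : ((x0:ℝ):ℂ) + (r/2 : ℝ) * I ∈ {z : ℂ | 0 < z.im} := by
    simp only [Set.mem_setOf_eq, Complex.add_im, Complex.ofReal_im, Complex.mul_im,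
      Complex.ofReal_re, Complex.I_im, Complex.I_re, mul_zero, mul_one, zero_add, zero_mul,
      add_zero]
    linarith
  have hFz1 : F =ᶠ[nhds (((x0:ℝ):ℂ) + (r/2 : ℝ) * I)] 0 := by
    filter_upwards [(hSopen.inter hUHopen).mem_nhds ⟨hz1S, hz1U⟩] with u hu
    have h1 : H u = F u := by simp only [hHdef]; rw [if_pos (le_of_lt hu.2)]
    rw [← h1]
    exact hHS hu.1
  have hFUH : Set.EqOn F 0 {z : ℂ | 0 < z.im} :=
    hFanal.eqOn_zero_of_preconnected_of_eventuallyEq_zero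
      ((convex_halfSpace_im_gt 0).isPreconnected) hz1U hFz1
  -- conclude on the real line by continuity from above
  intro t
  rw [← hFreal t]
  have hmemC : ((t:ℝ):ℂ) ∈ {z : ℂ | 0 ≤ z.im} := by simp
  have hpath : Filter.Tendsto (fun y : ℝ => ((t:ℂ) + (y:ℂ) * I)) (nhdsWithin 0 (Set.Ioi 0))
      (nhdsWithin ((t:ℝ):ℂ) {z : ℂ | 0 ≤ z.im}) := by
    apply tendsto_nhdsWithin_of_tendsto_nhds_of_eventually_within
    · have hco : Continuous fun y : ℝ => ((t:ℂ) + (y:ℂ) * I) := by fun_prop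
      have h2 := hco.tendsto 0
      simp only [Complex.ofReal_zero, zero_mul, add_zero] at h2
      exact h2.mono_left nhdsWithin_le_nhds
    · filter_upwards [self_mem_nhdsWithin] with y hy
      simp only [Set.mem_setOf_eq, Complex.add_im, Complex.ofReal_im, Complex.mul_im,
        Complex.ofReal_re, Complex.I_im, Complex.I_re, mul_zero, mul_one, zero_add, zero_mul,
        add_zero]
      exact le_of_lt hy
  have h1 : Filter.Tendsto (fun y : ℝ => F ((t:ℂ) + (y:ℂ) * I)) (nhdsWithin 0 (Set.Ioi 0))
      (nhds (F t)) := ((hFcont _ hmemC).tendsto).comp hpath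
  have h2 : Filter.Tendsto (fun y : ℝ => F ((t:ℂ) + (y:ℂ) * I)) (nhdsWithin 0 (Set.Ioi 0))
      (nhds 0) := by
    apply Filter.Tendsto.congr' _ tendsto_const_nhds
    filter_upwards [self_mem_nhdsWithin] with y hy
    have hmem : ((t:ℂ) + (y:ℂ) * I) ∈ {z : ℂ | 0 < z.im} := by
      simp only [Set.mem_setOf_eq, Complex.add_im, Complex.ofReal_im, Complex.mul_im,
        Complex.ofReal_re, Complex.I_im, Complex.I_re, mul_zero, mul_one, zero_add, zero_mul,
        add_zero]
      exact hy
    exact (hFUH hmem).symm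
  exact tendsto_nhds_unique h1 h2
end helpers
end

section
/- Let λ and μ be finite complex measures on ℝ, both supported in [0, ∞), and set f(t) = ∫ exp(ipt) dλ(p) and g(t) = ∫ exp(ipt) dμ(p). If f(t) = g(t) for all t in some nonempty open interval, then f = g on all of ℝ. -/
open MeasureTheory Complex Set Filter Topology Bornology Asymptotics

private lemma xexp_le (x : ℝ) (hx : 0 ≤ x) : x * Real.exp (-x) ≤ 1 := by
  have h1 : x ≤ Real.exp x := by nlinarith [Real.add_one_le_exp x]
  calc x * Real.exp (-x) ≤ Real.exp x * Real.exp (-x) :=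
        mul_le_mul_of_nonneg_right h1 (Real.exp_pos _).le
    _ = 1 := by rw [← Real.exp_add]; simp

private lemma norm_exp_I_mul (p : ℝ) (z : ℂ) :
    ‖Complex.exp (I * p * z)‖ = Real.exp (-(p * z.im)) := by
  rw [Complex.norm_exp]
  congr 1
  simp [Complex.mul_re, Complex.mul_im]

/-- The Fourier-Laplace transform of `w ∂μ`. -/
private noncomputable def FLT (μ : Measure ℝ) (w : ℝ → ℂ) : ℂ → ℂ :=
  fun z => ∫ p, Complex.exp (I * p * z) * w p ∂μ

private lemma FLT_props (μ : Measure ℝ) [IsFiniteMeasure μ] (w : ℝ → ℂ)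
    (hw : Integrable w μ) (hw0 : ∀ᵐ p ∂μ, p < 0 → w p = 0) :
    ContinuousOn (FLT μ w) {z | 0 ≤ z.im}
    ∧ DifferentiableOn ℂ (FLT μ w) {z | 0 < z.im}
    ∧ ∀ z : ℂ, 0 ≤ z.im → ‖FLT μ w z‖ ≤ ∫ p, ‖w p‖ ∂μ := by
  have aesm : ∀ z : ℂ, AEStronglyMeasurable (fun p : ℝ => Complex.exp (I * p * z) * w p) μ := by
    intro z
    exact (((continuous_const.mul Complex.continuous_ofReal).mul
      continuous_const).cexp.aestronglyMeasurable).mul hw.1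
  have hb : ∀ z : ℂ, 0 ≤ z.im → ∀ᵐ (p : ℝ) ∂μ, ‖Complex.exp (I * p * z) * w p‖ ≤ ‖w p‖ := by
    intro z hz
    filter_upwards [hw0] with p hp
    rcases lt_or_ge p 0 with h | h
    · simp [hp h]
    · rw [norm_mul, norm_exp_I_mul]
      have : Real.exp (-(p * z.im)) ≤ 1 := by
        rw [Real.exp_le_one_iff]
        simp only [neg_nonpos]
        positivity
      nlinarith [norm_nonneg (w p)]
  have hint : ∀ z : ℂ, 0 ≤ z.im → Integrable (fun p : ℝ => Complex.exp (I * p * z) * w p) μ :=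
    fun z hz => Integrable.mono' hw.norm (aesm z) (hb z hz)
  refine ⟨?_, ?_, ?_⟩
  · -- continuity
    intro z₀ hz₀
    refine tendsto_integral_filter_of_dominated_convergence (fun p => ‖w p‖)
      (Eventually.of_forall fun z => aesm z) ?_ hw.norm ?_
    · filter_upwards [self_mem_nhdsWithin] with z hz
      exact hb z hz
    · refine Eventually.of_forall fun p => ?_
      have : Continuous fun z : ℂ => Complex.exp (I * p * z) * w p :=
        ((continuous_const.mul continuous_id).cexp).mul continuous_const
      exact (this.tendsto z₀).mono_left nhdsWithin_le_nhds
  · -- differentiability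
    intro z₀ hz₀
    set δ : ℝ := z₀.im with hδdef
    have hδ : 0 < δ := hz₀
    have key := hasDerivAt_integral_of_dominated_loc_of_deriv_le (μ := μ)
      (F := fun (z : ℂ) (p : ℝ) => Complex.exp (I * p * z) * w p)
      (F' := fun (z : ℂ) (p : ℝ) => Complex.exp (I * p * z) * (I * p) * w p)
      (x₀ := z₀) (bound := fun p => (2 / δ) * ‖w p‖) (Metric.ball_mem_nhds z₀ (by positivity : (0:ℝ) < δ / 2))
      (Eventually.of_forall fun z => aesm z) (hint z₀ hz₀.le)
      ((((continuous_const.mul Complex.continuous_ofReal).mul continuous_const).cexp.mul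
        (continuous_const.mul Complex.continuous_ofReal)).aestronglyMeasurable.mul hw.1)
      ?_ (hw.norm.const_mul _) ?_
    · exact key.2.differentiableAt.differentiableWithinAt
    · -- bound
      filter_upwards [hw0] with p hp z hzball
      rcases lt_or_ge p 0 with h | h
      · simp [hp h]
      · have him : δ / 2 ≤ z.im := by
          have h1 : |(z - z₀).im| ≤ ‖z - z₀‖ := Complex.abs_im_le_norm _
          rw [Metric.mem_ball, Complex.dist_eq] at hzball
          have h2 : |z.im - δ| < δ / 2 := by
            simpa [Complex.sub_im, hδdef] using lt_of_le_of_lt h1 hzball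
          rw [abs_lt] at h2
          linarith
        have hxe : p * Real.exp (-(p * (δ / 2))) ≤ 2 / δ := by
          have h1 : (p * (δ / 2)) * Real.exp (-(p * (δ / 2))) ≤ 1 := xexp_le _ (by positivity)
          rw [le_div_iff₀ hδ]
          nlinarith [Real.exp_pos (-(p * (δ / 2)))]
        calc ‖Complex.exp (I * p * z) * (I * p) * w p‖
            = Real.exp (-(p * z.im)) * |p| * ‖w p‖ := by
              rw [norm_mul, norm_mul, norm_exp_I_mul]
              simp [Complex.norm_real]
          _ ≤ Real.exp (-(p * (δ / 2))) * p * ‖w p‖ := by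
              apply mul_le_mul_of_nonneg_right _ (norm_nonneg _)
              rw [_root_.abs_of_nonneg h]
              apply mul_le_mul_of_nonneg_right _ h
              apply Real.exp_le_exp.2
              nlinarith
          _ ≤ (2 / δ) * ‖w p‖ := by
              apply mul_le_mul_of_nonneg_right _ (norm_nonneg _)
              calc Real.exp (-(p * (δ / 2))) * p = p * Real.exp (-(p * (δ / 2))) := by ring
                _ ≤ 2 / δ := hxe
    · -- differentiability of integrand
      refine Eventually.of_forall fun p => fun z _ => ?_
      have h0 : HasDerivAt (fun z : ℂ => I * p * z) (I * p) z := by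
        simpa using (hasDerivAt_id z).const_mul (I * (p:ℂ))
      exact h0.cexp.mul_const (w p)
  · -- bound
    intro z hz
    exact norm_integral_le_of_norm_le hw.norm (hb z hz)

private lemma ae_zero_of_setIntegral (μ : Measure ℝ) [IsFiniteMeasure μ] (w : ℝ → ℂ)
    (hw : Integrable w μ)
    (hsupp : ∀ A : Set ℝ, MeasurableSet A → A ⊆ Set.Iio 0 → ∫ p in A, w p ∂μ = 0) :
    ∀ᵐ p ∂μ, p < 0 → w p = 0 := by
  have h := ae_eq_zero_restrict_of_forall_setIntegral_eq_zero
    (μ := μ.restrict (Iio 0)) (f := w)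
    (fun s _ _ => (hw.restrict.restrict (s := s)))
    (fun s hs _ => by
      rw [Measure.restrict_restrict hs]
      exact hsupp (s ∩ Iio 0) (hs.inter measurableSet_Iio) inter_subset_right)
    (t := univ) MeasurableSet.univ (by simp [measure_ne_top])
  rw [Measure.restrict_univ] at h
  have h2 := (ae_restrict_iff' measurableSet_Iio).mp h
  filter_upwards [h2] with p hp hneg
  exact hp hneg

/-- Two functions of the form `∫ e^{ipt} dλ(p)`, with `λ` a finite complex measure
supported in `[0,∞)` (represented by densities w.r.t. finite measures), which agree on a
nonempty open interval agree everywhere on `ℝ`. -/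
theorem stmt2 (μ ν : Measure ℝ) [IsFiniteMeasure μ] [IsFiniteMeasure ν]
    (w v : ℝ → ℂ) (hw : Integrable w μ) (hv : Integrable v ν)
    (hsuppw : ∀ A : Set ℝ, MeasurableSet A → A ⊆ Set.Iio 0 → ∫ p in A, w p ∂μ = 0)
    (hsuppv : ∀ A : Set ℝ, MeasurableSet A → A ⊆ Set.Iio 0 → ∫ p in A, v p ∂ν = 0)
    (f g : ℝ → ℂ)
    (hf : ∀ t : ℝ, f t = ∫ p, Complex.exp (Complex.I * (p : ℂ) * (t : ℂ)) * w p ∂μ)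
    (hg : ∀ t : ℝ, g t = ∫ p, Complex.exp (Complex.I * (p : ℂ) * (t : ℂ)) * v p ∂ν)
    (a b : ℝ) (hab : a < b)
    (heq : ∀ t ∈ Set.Ioo a b, f t = g t) :
    ∀ t : ℝ, f t = g t := by
  classical
  have hw0 := ae_zero_of_setIntegral μ w hw hsuppw
  have hv0 := ae_zero_of_setIntegral ν v hv hsuppv
  obtain ⟨FCw, FDw, FMw⟩ := FLT_props μ w hw hw0
  obtain ⟨FCv, FDv, FMv⟩ := FLT_props ν v hv hv0
  set F : ℂ → ℂ := fun z => FLT μ w z - FLT ν v z with hFdef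
  have FC : ContinuousOn F {z : ℂ | 0 ≤ z.im} := FCw.sub FCv
  have FD : DifferentiableOn ℂ F {z : ℂ | 0 < z.im} := FDw.sub FDv
  set M : ℝ := (∫ p, ‖w p‖ ∂μ) + ∫ p, ‖v p‖ ∂ν with hMdef
  have hM0 : 0 ≤ M := by
    rw [hMdef]
    have h1 : 0 ≤ ∫ p, ‖w p‖ ∂μ := integral_nonneg fun p => norm_nonneg _
    have h2 : 0 ≤ ∫ p, ‖v p‖ ∂ν := integral_nonneg fun p => norm_nonneg _
    linarith
  have FM : ∀ z : ℂ, 0 ≤ z.im → ‖F z‖ ≤ M := fun z hz =>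
    (norm_sub_le _ _).trans (add_le_add (FMw z hz) (FMv z hz))
  have Freal : ∀ t : ℝ, F t = f t - g t := by
    intro t
    simp only [hFdef, FLT]
    rw [hf t, hg t]
  have F0 : ∀ x ∈ Set.Ioo a b, F (x : ℂ) = 0 := fun x hx => by
    rw [Freal x, heq x hx, sub_self]
  -- geometric setup
  obtain ⟨c, hc⟩ : ∃ x : ℝ, x = (a + b) / 2 := ⟨_, rfl⟩
  obtain ⟨r, hrdef⟩ : ∃ x : ℝ, x = b - a := ⟨_, rfl⟩
  have hr : 0 < r := by rw [hrdef]; linarith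
  set S : ℂ → ℂ := fun z => (c : ℂ) + (((8:ℝ)⁻¹ : ℝ) : ℂ) * (z - (c:ℂ)) with hSdef
  set J : ℂ → ℂ := fun z => (c : ℂ) - ((r^2 : ℝ) : ℂ) * (z - (c:ℂ))⁻¹ with hJdef
  set φ : ℂ → ℂ := fun z => (z - (c:ℂ)) / (z - (c:ℂ) + I) with hφdef
  have Sim : ∀ z : ℂ, (S z).im = 8⁻¹ * z.im := by
    intro z
    simp [hSdef, Complex.add_im, Complex.mul_im, Complex.sub_im, Complex.ofReal_im,
      Complex.ofReal_re, Complex.sub_re]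
  have Jim : ∀ z : ℂ, (J z).im = r^2 * z.im / Complex.normSq (z - (c:ℂ)) := by
    intro z
    simp [hJdef, Complex.sub_im, Complex.mul_im, Complex.ofReal_im, Complex.ofReal_re,
      Complex.inv_im, Complex.inv_re, Complex.sub_re, div_eq_mul_inv, -Complex.ofReal_pow]
    ring
  have hS0 : ∀ z : ℂ, 0 ≤ z.im → 0 ≤ (S z).im := fun z hz => by
    rw [Sim]; exact mul_nonneg (by norm_num) hz
  have hS1 : ∀ z : ℂ, 0 < z.im → 0 < (S z).im := fun z hz => by
    rw [Sim]; exact mul_pos (by norm_num) hz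
  have hJ0 : ∀ z : ℂ, 0 ≤ z.im → 0 ≤ (J z).im := fun z hz => by
    rw [Jim]
    exact div_nonneg (mul_nonneg (sq_nonneg r) hz) (Complex.normSq_nonneg _)
  have hJ1 : ∀ z : ℂ, 0 < z.im → 0 < (J z).im := fun z hz => by
    have hzc : z - (c:ℂ) ≠ 0 := fun h => by
      have := congrArg Complex.im h
      simp at this
      rw [this] at hz; exact lt_irrefl 0 hz
    rw [Jim]
    have h1 : 0 < Complex.normSq (z - (c:ℂ)) := Complex.normSq_pos.mpr hzc
    have hr2 : (0:ℝ) < r^2 := by positivity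
    exact div_pos (mul_pos hr2 hz) h1
  have hJJ : ∀ z : ℂ, z ≠ (c:ℂ) → J (J z) = z := by
    intro z hz
    have h1 : z - (c:ℂ) ≠ 0 := sub_ne_zero.mpr hz
    have hr2 : ((r^2 : ℝ) : ℂ) ≠ 0 := by
      simp only [ne_eq, Complex.ofReal_eq_zero]
      positivity
    have key : ((r^2:ℝ):ℂ) = ((r:ℂ))^2 := by push_cast; ring
    have hr2' : ((r:ℝ):ℂ)^2 ≠ 0 := by
      have : (r:ℂ) ≠ 0 := by exact_mod_cast hr.ne'
      exact pow_ne_zero 2 this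
    simp only [hJdef, key]
    have h3 : (c:ℂ) - (r:ℂ)^2 * (z - (c:ℂ))⁻¹ - (c:ℂ) = -((r:ℂ)^2 * (z - (c:ℂ))⁻¹) := by ring
    rw [h3]
    have h4 : (-((r:ℂ)^2 * (z - (c:ℂ))⁻¹))⁻¹ = -((z - (c:ℂ)) / (r:ℂ)^2) := by
      rw [inv_neg, mul_inv, inv_inv]
      field_simp
    rw [h4]
    field_simp
    rw [mul_div_cancel_left₀ _ (by exact_mod_cast hr.ne' : (r:ℂ) ≠ 0)]
    ring
  have hφ_den : ∀ z : ℂ, 0 ≤ z.im → z - (c:ℂ) + I ≠ 0 := by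
    intro z hz h
    have := congrArg Complex.im h
    simp [Complex.add_im, Complex.sub_im] at this
    linarith
  have hφ1 : ∀ z : ℂ, 0 ≤ z.im → ‖φ z‖ ≤ 1 := by
    intro z hz
    have habs : ‖z - (c:ℂ)‖ ≤ ‖z - (c:ℂ) + I‖ := by
      simp only [Complex.norm_def]
      apply Real.sqrt_le_sqrt
      simp only [Complex.normSq_apply, Complex.add_re, Complex.add_im, Complex.sub_re,
        Complex.sub_im, Complex.I_re, Complex.I_im, Complex.ofReal_re, Complex.ofReal_im]
      nlinarith
    simp only [hφdef, norm_div]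
    apply div_le_one_of_le₀ habs (norm_nonneg _)
  -- boundary vanishing
  have hQreal : ∀ t : ℝ, φ (t:ℂ) * (F (S (t:ℂ)) * F (J (t:ℂ))) = 0 := by
    intro t
    by_cases h4 : |t - c| < 4*r
    · have hS : S (t:ℂ) = ((c + 8⁻¹*(t - c) : ℝ) : ℂ) := by
        simp only [hSdef]; push_cast; ring
      have hmem : c + 8⁻¹*(t - c) ∈ Set.Ioo a b := by
        have := abs_lt.mp h4
        constructor <;> [linarith [this.1]; linarith [this.2]]
      rw [hS, F0 _ hmem]
      ring
    · push_neg at h4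
      have ht : t - c ≠ 0 := by
        intro h
        rw [h] at h4; simp at h4; nlinarith
      have hJt : J (t:ℂ) = ((c - r^2/(t - c) : ℝ) : ℂ) := by
        simp only [hJdef]; push_cast; ring
      have habs : |r^2/(t-c)| ≤ r/4 := by
        rw [abs_div]
        rw [div_le_div_iff₀ (abs_pos.mpr ht) (by norm_num : (0:ℝ) < 4)]
        have : |r^2| = r^2 := abs_of_nonneg (sq_nonneg r)
        rw [this]
        nlinarith
      have hmem : c - r^2/(t - c) ∈ Set.Ioo a b := by
        have := abs_le.mp habs
        constructor <;> [linarith [this.2]; linarith [this.1]]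
      rw [hJt, F0 _ hmem]
      ring
  set Q : ℂ → ℂ := fun z => φ z * (F (S z) * F (J z)) with hQdef
  have hQsz : ∀ z : ℂ, 0 ≤ z.im → ‖Q z‖ ≤ M * M * ‖φ z‖ := by
    intro z hz
    calc ‖Q z‖ = ‖φ z‖ * (‖F (S z)‖ * ‖F (J z)‖) := by
          simp only [hQdef]; rw [norm_mul, norm_mul]
      _ ≤ ‖φ z‖ * (M * M) := by
          have h1 := FM _ (hS0 z hz)
          have h2 := FM _ (hJ0 z hz)
          have hn1 : 0 ≤ ‖F (S z)‖ := norm_nonneg _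
          have hn2 : 0 ≤ ‖F (J z)‖ := norm_nonneg _
          have hφn : 0 ≤ ‖φ z‖ := norm_nonneg _
          exact mul_le_mul_of_nonneg_left (mul_le_mul h1 h2 hn2 hM0) hφn
      _ = M * M * ‖φ z‖ := by ring
  have hQb : ∀ z : ℂ, 0 ≤ z.im → ‖Q z‖ ≤ M * M := fun z hz =>
    (hQsz z hz).trans (mul_le_of_le_one_right (by positivity) (hφ1 z hz))
  -- continuity of the pieces
  have Scont : Continuous S := by
    simp only [hSdef]; fun_prop
  have QC : ContinuousOn Q {z : ℂ | 0 ≤ z.im} := by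
    intro z₀ hz₀
    by_cases hzc : z₀ = (c:ℂ)
    · subst hzc
      have hQc : Q (c:ℂ) = 0 := by simp [hQdef, hφdef]
      have hφcont : ContinuousAt φ (c:ℂ) := by
        simp only [hφdef]
        exact ((continuous_id.sub continuous_const).continuousAt).div
          ((continuous_id.sub continuous_const).add continuous_const).continuousAt
          (hφ_den _ hz₀)
      have hlim : Tendsto (fun z => M * M * ‖φ z‖) (𝓝[{z : ℂ | 0 ≤ z.im}] (c:ℂ)) (𝓝 0) := by
        have h1 : Tendsto (fun z => M * M * ‖φ z‖) (𝓝 (c:ℂ)) (𝓝 (M * M * ‖φ (c:ℂ)‖)) :=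
          continuousAt_const.mul hφcont.norm
        have hφc : φ (c:ℂ) = 0 := by simp [hφdef]
        rw [hφc, norm_zero, mul_zero] at h1
        exact h1.mono_left nhdsWithin_le_nhds
      unfold ContinuousWithinAt
      rw [hQc]
      exact squeeze_zero_norm'
        (by filter_upwards [self_mem_nhdsWithin] with z hz; exact hQsz z hz) hlim
    · have h1 : ContinuousWithinAt φ {z : ℂ | 0 ≤ z.im} z₀ := by
        apply ContinuousAt.continuousWithinAt
        simp only [hφdef]
        exact ((continuous_id.sub continuous_const).continuousAt).div
          ((continuous_id.sub continuous_const).add continuous_const).continuousAt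
          (hφ_den _ hz₀)
      have h2 : ContinuousWithinAt (fun z => F (S z)) {z : ℂ | 0 ≤ z.im} z₀ :=
        (FC _ (hS0 z₀ hz₀)).comp Scont.continuousWithinAt (fun z hz => hS0 z hz)
      have h3 : ContinuousWithinAt (fun z => F (J z)) {z : ℂ | 0 ≤ z.im} z₀ := by
        have hJcont : ContinuousWithinAt J {z : ℂ | 0 ≤ z.im} z₀ := by
          apply ContinuousAt.continuousWithinAt
          simp only [hJdef]
          exact continuousAt_const.sub (continuousAt_const.mul
            (((continuous_id.sub continuous_const).continuousAt).inv₀ (sub_ne_zero.mpr hzc)))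
        exact (FC _ (hJ0 z₀ hz₀)).comp hJcont (fun z hz => hJ0 z hz)
      exact h1.mul (h2.mul h3)
  have oU : IsOpen {z : ℂ | 0 < z.im} := isOpen_lt continuous_const Complex.continuous_im
  have FSdiff : DifferentiableOn ℂ (fun z => F (S z)) {z : ℂ | 0 < z.im} := by
    intro z₀ hz₀
    apply DifferentiableAt.differentiableWithinAt
    have hFd : DifferentiableAt ℂ F (S z₀) :=
      (FD _ (hS1 z₀ hz₀)).differentiableAt (oU.mem_nhds (hS1 z₀ hz₀))
    have hSd : DifferentiableAt ℂ S z₀ := by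
      simp only [hSdef]
      fun_prop
    exact hFd.comp z₀ hSd
  have FJdiff : DifferentiableOn ℂ (fun z => F (J z)) {z : ℂ | 0 < z.im} := by
    intro z₀ hz₀
    apply DifferentiableAt.differentiableWithinAt
    have hzc : z₀ ≠ (c:ℂ) := by
      intro h
      rw [h] at hz₀
      simp [Set.mem_setOf_eq] at hz₀
    have hFd : DifferentiableAt ℂ F (J z₀) :=
      (FD _ (hJ1 z₀ hz₀)).differentiableAt (oU.mem_nhds (hJ1 z₀ hz₀))
    have hJd : DifferentiableAt ℂ J z₀ := by
      simp only [hJdef]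
      exact (differentiableAt_const _).sub ((differentiableAt_const _).mul
        ((differentiableAt_id.sub (differentiableAt_const _)).inv (sub_ne_zero.mpr hzc)))
    exact hFd.comp z₀ hJd
  have QD : DifferentiableOn ℂ Q {z : ℂ | 0 < z.im} := by
    intro z₀ hz₀
    have hzc : z₀ ≠ (c:ℂ) := by
      intro h
      rw [h] at hz₀
      simp [Set.mem_setOf_eq] at hz₀
    have hφd : DifferentiableAt ℂ φ z₀ := by
      simp only [hφdef]
      exact (differentiableAt_id.sub (differentiableAt_const _)).div
        ((differentiableAt_id.sub (differentiableAt_const _)).add (differentiableAt_const _))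
        (hφ_den _ hz₀.le)
    exact (hφd.differentiableWithinAt.mul ((FSdiff z₀ hz₀).mul (FJdiff z₀ hz₀)))
  -- Phragmen-Lindelof
  set q : ℂ → ℂ := fun z => Q (I * z) with hqdef
  have hIim : ∀ z : ℂ, (I * z).im = z.re := by
    intro z; simp [Complex.mul_im]
  have qd : DiffContOnCl ℂ q {z : ℂ | 0 < z.re} := by
    constructor
    · have : DifferentiableOn ℂ (fun z : ℂ => I * z) {z : ℂ | 0 < z.re} := by fun_prop
      exact QD.comp this (fun z hz => by simp only [Set.mem_setOf_eq, hIim]; exact hz)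
    · rw [closure_setOf_lt_re]
      exact QC.comp (continuous_const.mul continuous_id).continuousOn
        (fun z hz => by simp only [Set.mem_setOf_eq, hIim]; exact hz)
  have hexp : ∃ c' < (2:ℝ), ∃ B, q =O[Bornology.cobounded ℂ ⊓ 𝓟 {z : ℂ | 0 < z.re}]
      fun z => Real.exp (B * ‖z‖ ^ c') := by
    refine ⟨1, one_lt_two, 0, Asymptotics.IsBigO.of_bound (M*M) ?_⟩
    rw [eventually_inf_principal]
    apply Eventually.of_forall
    intro z hz
    have h1 : ‖q z‖ ≤ M * M := hQb _ (by rw [hIim]; exact (le_of_lt hz))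
    simpa using h1
  have hre : IsBoundedUnder (· ≤ ·) atTop fun x : ℝ => ‖q (x:ℂ)‖ := by
    apply isBoundedUnder_of_eventually_le (a := M*M)
    filter_upwards [eventually_ge_atTop (0:ℝ)] with x hx
    exact hQb _ (by rw [hIim]; simpa using hx)
  have him : ∀ x : ℝ, ‖q ((x:ℂ) * I)‖ ≤ 0 := by
    intro x
    have h1 : I * ((x:ℂ) * I) = ((-x : ℝ) : ℂ) := by
      push_cast
      rw [show I * ((x:ℂ) * I) = (x:ℂ) * (I * I) by ring, Complex.I_mul_I]
      ring
    simp only [hqdef, h1]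
    rw [show Q ((-x : ℝ) : ℂ) = 0 from hQreal (-x)]
    simp
  have hq0 : ∀ z : ℂ, 0 ≤ z.re → ‖q z‖ ≤ 0 := fun z hz =>
    PhragmenLindelof.right_half_plane_of_bounded_on_real qd hexp hre him hz
  have hQ0 : ∀ z : ℂ, 0 < z.im → Q z = 0 := by
    intro z hz
    have h1 : I * (-I * z) = z := by
      rw [show I * (-I * z) = -(I * I) * z by ring, Complex.I_mul_I]; ring
    have h2 : (0:ℝ) ≤ (-I * z).re := by
      simp only [Complex.mul_re, Complex.neg_re, Complex.I_re, Complex.neg_im, Complex.I_im]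
      simpa using hz.le
    have h3 := hq0 (-I * z) h2
    simp only [hqdef] at h3
    rw [h1] at h3
    exact norm_le_zero_iff.mp h3
  have hprod : ∀ z : ℂ, 0 < z.im → F (S z) = 0 ∨ F (J z) = 0 := by
    intro z hz
    have hzc : z ≠ (c:ℂ) := by
      intro h; rw [h] at hz; simp at hz
    have hφne : φ z ≠ 0 := by
      simp only [hφdef]
      exact div_ne_zero (sub_ne_zero.mpr hzc) (hφ_den z hz.le)
    have h := hQ0 z hz
    simp only [hQdef] at h
    rcases mul_eq_zero.mp h with h | h
    · exact absurd h hφne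
    · exact mul_eq_zero.mp h
  have hFU : ∀ z : ℂ, 0 < z.im → F z = 0 := by
    by_cases hcase : ∀ z : ℂ, 0 < z.im → F (S z) = 0
    · intro z hz
      have him8 : (0:ℝ) < ((c:ℂ) + 8*(z - (c:ℂ))).im := by
        have : ((c:ℂ) + 8*(z - (c:ℂ))).im = 8 * z.im := by
          simp [Complex.add_im, Complex.mul_im, Complex.sub_im, Complex.sub_re]
        rw [this]; exact mul_pos (by norm_num) hz
      have hSz : S ((c:ℂ) + 8*(z - (c:ℂ))) = z := by
        simp only [hSdef]; push_cast; ring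
      rw [← hSz]
      exact hcase _ him8
    · push_neg at hcase
      obtain ⟨z₀, hz₀, hFS⟩ := hcase
      have hFJanalytic : AnalyticOnNhd ℂ (fun z => F (J z)) {z : ℂ | 0 < z.im} :=
        FJdiff.analyticOnNhd oU
      have hcont : ContinuousAt (fun z => F (S z)) z₀ :=
        ((FSdiff z₀ hz₀).differentiableAt (oU.mem_nhds hz₀)).continuousAt
      have hev : (fun z => F (J z)) =ᶠ[𝓝 z₀] 0 := by
        filter_upwards [hcont.eventually_ne hFS, oU.mem_nhds hz₀] with z h1 h2
        exact (hprod z h2).resolve_left h1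
      have hEq := hFJanalytic.eqOn_zero_of_preconnected_of_eventuallyEq_zero
        (convex_halfSpace_im_gt 0).isPreconnected hz₀ hev
      intro z hz
      have hzc : z ≠ (c:ℂ) := by
        intro h; rw [h] at hz; simp at hz
      have h1 : F (J (J z)) = 0 := hEq (hJ1 z hz)
      rwa [hJJ z hzc] at h1
  -- boundary values
  intro t
  have key : F (t:ℂ) = 0 := by
    have hγ : Tendsto (fun ε : ℝ => ((t:ℂ) + (ε:ℂ) * I)) (𝓝[>] 0)
        (𝓝[{z : ℂ | 0 ≤ z.im}] (t:ℂ)) := by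
      apply tendsto_nhdsWithin_of_tendsto_nhds_of_eventually_within
      · have hcont : Continuous fun ε : ℝ => ((t:ℂ) + (ε:ℂ) * I) := by fun_prop
        have h0 : Tendsto (fun ε : ℝ => ((t:ℂ) + (ε:ℂ) * I)) (𝓝[>] (0:ℝ))
            (𝓝 ((t:ℂ) + (((0:ℝ)):ℂ) * I)) :=
          (hcont.tendsto 0).mono_left nhdsWithin_le_nhds
        simpa using h0
      · filter_upwards [self_mem_nhdsWithin] with ε (hε : 0 < ε)
        simp only [Set.mem_setOf_eq, Complex.add_im, Complex.ofReal_im, Complex.mul_im,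
          Complex.ofReal_re, Complex.I_im, Complex.I_re]
        simpa using hε.le
    have h1 : Tendsto (fun ε : ℝ => F ((t:ℂ) + (ε:ℂ) * I)) (𝓝[>] 0) (𝓝 (F (t:ℂ))) :=
      ((FC (t:ℂ) (by simp)).tendsto).comp hγ
    have h2 : Tendsto (fun ε : ℝ => F ((t:ℂ) + (ε:ℂ) * I)) (𝓝[>] 0) (𝓝 0) := by
      apply Tendsto.congr' _ tendsto_const_nhds
      filter_upwards [self_mem_nhdsWithin] with ε (hε : 0 < ε)
      refine (hFU _ ?_).symm
      simp only [Complex.add_im, Complex.ofReal_im, Complex.mul_im, Complex.ofReal_re,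
        Complex.I_im, Complex.I_re]
      simpa using hε
    exact tendsto_nhds_unique h1 h2
  have h := (Freal t).symm.trans key
  exact sub_eq_zero.mp h
end

section
/- Let λ be a finite complex measure on ℝ⁴ supported in the closed forward light cone V̄₊. Then the function F(z) = ∫ exp(i p·z) dλ(p), where p·z is the complexified Minkowski inner product, is well defined, holomorphic on the forward tube T₊ = ℝ⁴ + i V₊ = {x + iy : x ∈ ℝ⁴, y ∈ V₊}, bounded by ‖λ‖ on T₊, and continuous on T₊ ∪ ℝ⁴. -/
open MeasureTheory

/-- The closed forward light cone `V̄₊`. -/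
def fwdCone : Set (Fin 4 → ℝ) :=
  {p | 0 ≤ p 0 ∧ 0 ≤ p 0 ^ 2 - (p 1 ^ 2 + p 2 ^ 2 + p 3 ^ 2)}

/-- The open forward light cone `V₊`. -/
def openCone : Set (Fin 4 → ℝ) :=
  {p | 0 < p 0 ∧ 0 < p 0 ^ 2 - (p 1 ^ 2 + p 2 ^ 2 + p 3 ^ 2)}

/-- The complexified Minkowski inner product `p·z`. -/
def minkC (p : Fin 4 → ℝ) (z : Fin 4 → ℂ) : ℂ :=
  (p 0 : ℂ) * z 0 - ((p 1 : ℂ) * z 1 + (p 2 : ℂ) * z 2 + (p 3 : ℂ) * z 3)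

/-- The real Minkowski inner product. -/
def mdot (p y : Fin 4 → ℝ) : ℝ :=
  p 0 * y 0 - (p 1 * y 1 + p 2 * y 2 + p 3 * y 3)

lemma openCone_subset : openCone ⊆ fwdCone := fun _ hp => ⟨hp.1.le, hp.2.le⟩

lemma abs_le_cone {p : Fin 4 → ℝ} (hp : p ∈ fwdCone) (i : Fin 4) : |p i| ≤ p 0 := by
  obtain ⟨h0, h1⟩ := hp
  fin_cases i <;> simp <;> rw [abs_le] <;>
    constructor <;> nlinarith [sq_nonneg (p 1), sq_nonneg (p 2), sq_nonneg (p 3)]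

lemma cs_cone {p : Fin 4 → ℝ} (hp : p ∈ fwdCone) (a b c : ℝ) :
    p 1 * a + p 2 * b + p 3 * c ≤ p 0 * Real.sqrt (a ^ 2 + b ^ 2 + c ^ 2) := by
  obtain ⟨h0, h1⟩ := hp
  set s := Real.sqrt (a ^ 2 + b ^ 2 + c ^ 2) with hs
  have hsnn : 0 ≤ s := Real.sqrt_nonneg _
  have hs2 : s ^ 2 = a ^ 2 + b ^ 2 + c ^ 2 := Real.sq_sqrt (by positivity)
  nlinarith [sq_nonneg (p 1 * b - p 2 * a), sq_nonneg (p 1 * c - p 3 * a),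
    sq_nonneg (p 2 * c - p 3 * b), sq_nonneg (p 1 * a + p 2 * b + p 3 * c - p 0 * s),
    sq_nonneg (p 1 * a + p 2 * b + p 3 * c + p 0 * s), mul_nonneg h0 hsnn]

lemma exp_norm_eq (p : Fin 4 → ℝ) (z : Fin 4 → ℂ) :
    ‖Complex.exp (Complex.I * minkC p z)‖ =
      Real.exp (-(mdot p fun j => (z j).im)) := by
  rw [Complex.norm_exp]
  congr 1
  simp [minkC, mdot, Complex.mul_re, Complex.mul_im]

lemma mdot_nonneg {p y : Fin 4 → ℝ} (hp : p ∈ fwdCone) (hy : y ∈ fwdCone) :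
    0 ≤ mdot p y := by
  have h1 := cs_cone hp (y 1) (y 2) (y 3)
  have hsy : Real.sqrt (y 1 ^ 2 + y 2 ^ 2 + y 3 ^ 2) ≤ y 0 := by
    rw [show y 0 = Real.sqrt (y 0 ^ 2) from (Real.sqrt_sq hy.1).symm]
    exact Real.sqrt_le_sqrt (by nlinarith [hy.2])
  have h2 := mul_le_mul_of_nonneg_left hsy hp.1
  unfold mdot; nlinarith

lemma integrand_norm_le (p : Fin 4 → ℝ) (z : Fin 4 → ℂ) (w : ℂ)
    (hp : p ∈ fwdCone) (hy : (fun j => (z j).im) ∈ fwdCone) :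
    ‖Complex.exp (Complex.I * minkC p z) * w‖ ≤ ‖w‖ := by
  rw [norm_mul, exp_norm_eq]
  have h := mdot_nonneg hp hy
  nlinarith [Real.exp_le_one_iff.2 (by linarith : -(mdot p fun j => (z j).im) ≤ 0),
    norm_nonneg w, Real.exp_pos (-(mdot p fun j => (z j).im))]

/-- The Minkowski pairing as a continuous linear map in `z`. -/
noncomputable def mL (p : Fin 4 → ℝ) : (Fin 4 → ℂ) →L[ℂ] ℂ :=
  (p 0 : ℂ) • ContinuousLinearMap.proj 0 -
    ((p 1 : ℂ) • ContinuousLinearMap.proj 1 + (p 2 : ℂ) • ContinuousLinearMap.proj 2 +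
      (p 3 : ℂ) • ContinuousLinearMap.proj 3)

lemma mL_apply (p : Fin 4 → ℝ) (z : Fin 4 → ℂ) : mL p z = minkC p z := by simp [mL, minkC]

lemma mL_norm_le (p : Fin 4 → ℝ) (h : ∀ i, |p i| ≤ p 0) : ‖mL p‖ ≤ 4 * p 0 := by
  have h0 : 0 ≤ p 0 := le_trans (abs_nonneg _) (h 0)
  refine ContinuousLinearMap.opNorm_le_bound _ (by linarith) fun z => ?_
  rw [mL_apply]
  have hz : ∀ i, ‖z i‖ ≤ ‖z‖ := fun i => norm_le_pi_norm z i
  calc ‖minkC p z‖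
      ≤ ‖(p 0 : ℂ) * z 0‖ + (‖(p 1 : ℂ) * z 1‖ + ‖(p 2 : ℂ) * z 2‖ + ‖(p 3 : ℂ) * z 3‖) := by
        unfold minkC
        refine le_trans (norm_sub_le _ _) (by gcongr; exact le_trans (norm_add₃_le) le_rfl)
    _ ≤ p 0 * ‖z‖ + (p 0 * ‖z‖ + p 0 * ‖z‖ + p 0 * ‖z‖) := by
        gcongr <;> · rw [norm_mul, Complex.norm_real]
                     exact mul_le_mul (h _) (hz _) (norm_nonneg _) h0
    _ = 4 * p 0 * ‖z‖ := by ring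

lemma mL_cont : Continuous fun p : Fin 4 → ℝ => mL p := by
  unfold mL; fun_prop

lemma hasFDeriv_integrand (p : Fin 4 → ℝ) (wp : ℂ) (z : Fin 4 → ℂ) :
    HasFDerivAt (fun z => Complex.exp (Complex.I * minkC p z) * wp)
      ((Complex.exp (Complex.I * minkC p z) * wp * Complex.I) • mL p) z := by
  have h0 : HasFDerivAt (fun z => minkC p z) (mL p) z := by
    have : (fun z : Fin 4 → ℂ => minkC p z) = ⇑(mL p) := funext fun z => (mL_apply p z).symm
    rw [this]; exact (mL p).hasFDerivAt
  have h1 := (h0.const_mul Complex.I).cexp.mul_const wp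
  refine h1.congr_fderiv ?_
  rw [smul_smul, smul_smul]
  congr 1
  ring

/-- For a finite complex measure supported in the closed forward cone (density `w` w.r.t.
a finite measure `μ`), `F z = ∫ e^{i p·z} dλ(p)` is well defined on the closed forward
tube, holomorphic on the forward tube `T₊ = ℝ⁴ + iV₊`, bounded there by the total
variation, and continuous on `T₊ ∪ ℝ⁴`. -/
theorem stmt8 (μ : Measure (Fin 4 → ℝ)) [IsFiniteMeasure μ]
    (w : (Fin 4 → ℝ) → ℂ) (hw : Integrable w μ)
    (hsupp : ∀ᵐ p ∂μ, p ∈ fwdCone)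
    (F : (Fin 4 → ℂ) → ℂ)
    (hF : ∀ z : Fin 4 → ℂ,
      F z = ∫ p, Complex.exp (Complex.I * minkC p z) * w p ∂μ) :
    (∀ z : Fin 4 → ℂ, (fun j => (z j).im) ∈ fwdCone →
        Integrable (fun p => Complex.exp (Complex.I * minkC p z) * w p) μ) ∧
    DifferentiableOn ℂ F {z : Fin 4 → ℂ | (fun j => (z j).im) ∈ openCone} ∧
    (∀ z : Fin 4 → ℂ, (fun j => (z j).im) ∈ openCone → ‖F z‖ ≤ ∫ p, ‖w p‖ ∂μ) ∧
    ContinuousOn F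
      {z : Fin 4 → ℂ | (fun j => (z j).im) ∈ openCone ∨ ∀ j, (z j).im = 0} := by
  have hFe : F = fun z => ∫ p, Complex.exp (Complex.I * minkC p z) * w p ∂μ := funext hF
  subst hFe
  have meas : ∀ z : Fin 4 → ℂ,
      AEStronglyMeasurable (fun p => Complex.exp (Complex.I * minkC p z) * w p) μ := by
    intro z
    apply AEStronglyMeasurable.mul _ hw.1
    apply Continuous.aestronglyMeasurable
    unfold minkC; fun_prop
  have int : ∀ z : Fin 4 → ℂ, (fun j => (z j).im) ∈ fwdCone →
      Integrable (fun p => Complex.exp (Complex.I * minkC p z) * w p) μ := by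
    intro z hz
    exact Integrable.mono' hw.norm (meas z)
      (hsupp.mono fun p hp => integrand_norm_le p z (w p) hp hz)
  refine ⟨int, ?_, ?_, ?_⟩
  · -- differentiability
    intro z₀ hz₀
    simp only [Set.mem_setOf_eq] at hz₀
    set y₀ : Fin 4 → ℝ := fun j => (z₀ j).im with hy₀
    set sy := Real.sqrt (y₀ 1 ^ 2 + y₀ 2 ^ 2 + y₀ 3 ^ 2) with hsy
    have hc : 0 < y₀ 0 - sy := by
      have h1 : sy < Real.sqrt (y₀ 0 ^ 2) :=
        Real.sqrt_lt_sqrt (by positivity) (by nlinarith [hz₀.2])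
      rw [Real.sqrt_sq hz₀.1.le] at h1
      linarith
    set c := y₀ 0 - sy with hcdef
    set ε := c / 8 with hε
    have hεpos : 0 < ε := by positivity
    -- key lower bound on the Minkowski product on the ball
    have key : ∀ z ∈ Metric.ball z₀ ε, ∀ p ∈ fwdCone,
        p 0 * (c / 2) ≤ mdot p fun j => (z j).im := by
      intro z hz p hp
      have hδ : ∀ j, |(z j).im - (z₀ j).im| ≤ ε := by
        intro j
        have h1 : |(z j).im - (z₀ j).im| ≤ ‖z j - z₀ j‖ := by
          rw [← Complex.sub_im]
          exact Complex.abs_im_le_norm _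
        have h2 : ‖z j - z₀ j‖ ≤ ‖z - z₀‖ := norm_le_pi_norm (z - z₀) j
        have h3 : ‖z - z₀‖ < ε := mem_ball_iff_norm.1 hz
        linarith
      have h1 : p 0 * c ≤ mdot p y₀ := by
        have := cs_cone hp (y₀ 1) (y₀ 2) (y₀ 3)
        unfold mdot; nlinarith [hp.1]
      have habs := abs_le_cone hp
      have hterm : ∀ i : Fin 4, -(p 0 * ε) ≤ p i * ((z i).im - (z₀ i).im) ∧
          p i * ((z i).im - (z₀ i).im) ≤ p 0 * ε := by
        intro i
        have h4 : |p i * ((z i).im - (z₀ i).im)| ≤ p 0 * ε := by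
          rw [abs_mul]
          exact mul_le_mul (habs i) (hδ i) (abs_nonneg _) (le_trans (abs_nonneg _) (habs 0))
        exact abs_le.1 h4
      have e0 := hterm 0; have e1 := hterm 1; have e2 := hterm 2; have e3 := hterm 3
      have hmd : mdot p (fun j => (z j).im) - mdot p y₀ =
          p 0 * ((z 0).im - (z₀ 0).im) - (p 1 * ((z 1).im - (z₀ 1).im) +
            p 2 * ((z 2).im - (z₀ 2).im) + p 3 * ((z 3).im - (z₀ 3).im)) := by
        unfold mdot; simp only [hy₀]; ring
      have : -(4 * (p 0 * ε)) ≤ mdot p (fun j => (z j).im) - mdot p y₀ := by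
        rw [hmd]; linarith [e0.1, e1.2, e2.2, e3.2]
      have hεc : 4 * ε = c / 2 := by rw [hε]; ring
      nlinarith
    -- the derivative bound
    have hbound : ∀ᵐ p ∂μ, ∀ z ∈ Metric.ball z₀ ε,
        ‖(Complex.exp (Complex.I * minkC p z) * w p * Complex.I) • mL p‖ ≤
          8 / c * ‖w p‖ := by
      refine hsupp.mono fun p hp => fun z hz => ?_
      have hk := key z hz p hp
      have h0 : 0 ≤ p 0 := hp.1
      calc ‖(Complex.exp (Complex.I * minkC p z) * w p * Complex.I) • mL p‖
          = ‖Complex.exp (Complex.I * minkC p z)‖ * ‖w p‖ * ‖mL p‖ := by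
            rw [norm_smul (Complex.exp (Complex.I * minkC p z) * w p * Complex.I) (mL p),
              norm_mul, norm_mul, Complex.norm_I, mul_one]
        _ ≤ Real.exp (-(p 0 * (c / 2))) * ‖w p‖ * (4 * p 0) := by
            rw [exp_norm_eq]
            have hA : Real.exp (-(mdot p fun j => (z j).im)) ≤
                Real.exp (-(p 0 * (c / 2))) := Real.exp_le_exp.2 (by linarith)
            have hB := mL_norm_le p (abs_le_cone hp)
            exact mul_le_mul (mul_le_mul hA le_rfl (norm_nonneg _) (Real.exp_pos _).le)
              hB (norm_nonneg _) (by positivity)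
        _ ≤ 8 / c * ‖w p‖ := by
            rw [show Real.exp (-(p 0 * (c / 2))) * ‖w p‖ * (4 * p 0) =
              (Real.exp (-(p 0 * (c / 2))) * (4 * p 0)) * ‖w p‖ by ring]
            have hle : Real.exp (-(p 0 * (c / 2))) * (4 * p 0) ≤ 8 / c := by
              rw [Real.exp_neg, mul_comm, ← div_eq_mul_inv,
                div_le_iff₀ (Real.exp_pos _)]
              have hxe : p 0 * (c / 2) ≤ Real.exp (p 0 * (c / 2)) := by
                linarith [Real.add_one_le_exp (p 0 * (c / 2))]
              have h8 : (0:ℝ) < 8 / c := by positivity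
              have := mul_le_mul_of_nonneg_left hxe h8.le
              have heq : 8 / c * (p 0 * (c / 2)) = 4 * p 0 := by
                field_simp; ring
              linarith
            exact mul_le_mul_of_nonneg_right hle (norm_nonneg _)
    have hder := hasFDerivAt_integral_of_dominated_of_fderiv_le
      (F := fun z p => Complex.exp (Complex.I * minkC p z) * w p)
      (F' := fun z p => (Complex.exp (Complex.I * minkC p z) * w p * Complex.I) • mL p)
      (x₀ := z₀) (bound := fun p => 8 / c * ‖w p‖)
      (Metric.ball_mem_nhds z₀ hεpos) (Filter.Eventually.of_forall meas)
      (int z₀ (openCone_subset hz₀))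
      (by
        apply AEStronglyMeasurable.fun_smul _ mL_cont.aestronglyMeasurable
        exact (AEStronglyMeasurable.mul
          (Continuous.aestronglyMeasurable (by unfold minkC; fun_prop)) hw.1).mul_const _)
      hbound (hw.norm.const_mul _)
      (Filter.Eventually.of_forall fun p z _ => hasFDeriv_integrand p (w p) z)
    exact hder.differentiableAt.differentiableWithinAt
  · -- bound
    intro z hz
    exact norm_integral_le_of_norm_le hw.norm
      (hsupp.mono fun p hp => integrand_norm_le p z (w p) hp (openCone_subset hz))
  · -- continuity
    intro z₀ hz₀
    have hmem : ∀ z ∈ {z : Fin 4 → ℂ | (fun j => (z j).im) ∈ openCone ∨ ∀ j, (z j).im = 0},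
        (fun j => (z j).im) ∈ fwdCone := by
      rintro z (hz | hz)
      · exact openCone_subset hz
      · exact ⟨by simp [hz 0], by simp [hz 0, hz 1, hz 2, hz 3]⟩
    apply continuousWithinAt_of_dominated (bound := fun p => ‖w p‖)
    · exact Filter.eventually_of_mem self_mem_nhdsWithin fun z _ => meas z
    · exact Filter.eventually_of_mem self_mem_nhdsWithin fun z hz =>
        hsupp.mono fun p hp => integrand_norm_le p z (w p) hp (hmem z hz)
    · exact hw.norm
    · refine Filter.Eventually.of_forall fun p => Continuous.continuousWithinAt ?_
      apply Continuous.mul _ continuous_const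
      apply Continuous.cexp
      apply Continuous.mul continuous_const
      unfold minkC; fun_prop
end
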